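/- Let x^0 > 0 and define the classic EM iteration x^{k+1} = P(x^k). Then for every k ≥ 0 one has I_A^b(x^{k+1}) ≤ I_A^b(x^k), and moreover the stronger estimate I(x^{k+1}, x^k) ≤ I_A^b(x^k) − I_A^b(x^{k+1}) holds. -/

import Mathlib

open Finset Filter Topology

noncomputable def dd {M N : ℕ} (A : Fin M → Fin N → ℝ) (x : Fin N → ℝ) (i : Fin M) : ℝ :=
  ∑ j, A i j * x j

noncomputable def ff {M N : ℕ} (A : Fin M → Fin N → ℝ) (b : Fin M → ℝ) (x : Fin N → ℝ) (j : Fin N) : ℝ :=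
  ∑ i, A i j * b i / dd A x i

noncomputable def EMop {M N : ℕ} (A : Fin M → Fin N → ℝ) (b : Fin M → ℝ) (x : Fin N → ℝ) : Fin N → ℝ :=
  fun j => x j * ff A b x j

noncomputable def KL {N : ℕ} (u v : Fin N → ℝ) : ℝ :=
  (∑ j, u j * Real.log (u j / v j)) - ∑ j, (u j - v j)

noncomputable def IAb {M N : ℕ} (A : Fin M → Fin N → ℝ) (b : Fin M → ℝ) (x : Fin N → ℝ) : ℝ :=
  (∑ i, b i * Real.log (b i / dd A x i)) - ∑ i, (b i - dd A x i)

noncomputable def finSup0 {ι : Type*} (s : Finset ι) (g : ι → ℝ) : ℝ :=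
  if h : s.Nonempty then s.sup' h g else 0

noncomputable def finInf0 {ι : Type*} (s : Finset ι) (g : ι → ℝ) : ℝ :=
  if h : s.Nonempty then s.inf' h g else 0

lemma dd_pos {M N : ℕ} (A : Fin M → Fin N → ℝ)
    (hA : ∀ i j, 0 ≤ A i j) (hrow : ∀ i, ∃ j, 0 < A i j)
    {x : Fin N → ℝ} (hx : ∀ j, 0 < x j) (i : Fin M) : 0 < dd A x i := by
  obtain ⟨j, hj⟩ := hrow i
  exact Finset.sum_pos' (fun j _ => mul_nonneg (hA i j) (hx j).le)
    ⟨j, Finset.mem_univ j, mul_pos hj (hx j)⟩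

lemma ff_pos {M N : ℕ} (A : Fin M → Fin N → ℝ) (b : Fin M → ℝ)
    (hA : ∀ i j, 0 ≤ A i j) (hcol : ∀ j, ∑ i, A i j = 1)
    (hrow : ∀ i, ∃ j, 0 < A i j) (hb : ∀ i, 0 < b i)
    {x : Fin N → ℝ} (hx : ∀ j, 0 < x j) (j : Fin N) : 0 < ff A b x j := by
  have hcolpos : ∃ i, 0 < A i j := by
    by_contra h
    push_neg at h
    have hz : ∑ i, A i j = 0 :=
      Finset.sum_eq_zero fun i _ => le_antisymm (h i) (hA i j)
    rw [hcol j] at hz; norm_num at hz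
  obtain ⟨i, hi⟩ := hcolpos
  exact Finset.sum_pos' (fun i _ =>
      div_nonneg (mul_nonneg (hA i j) (hb i).le) (dd_pos A hA hrow hx i).le)
    ⟨i, Finset.mem_univ i, div_pos (mul_pos hi (hb i)) (dd_pos A hA hrow hx i)⟩

lemma EMop_pos {M N : ℕ} (A : Fin M → Fin N → ℝ) (b : Fin M → ℝ)
    (hA : ∀ i j, 0 ≤ A i j) (hcol : ∀ j, ∑ i, A i j = 1)
    (hrow : ∀ i, ∃ j, 0 < A i j) (hb : ∀ i, 0 < b i)
    {x : Fin N → ℝ} (hx : ∀ j, 0 < x j) (j : Fin N) : 0 < EMop A b x j :=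
  mul_pos (hx j) (ff_pos A b hA hcol hrow hb hx j)

lemma sum_dd {M N : ℕ} (A : Fin M → Fin N → ℝ)
    (hcol : ∀ j, ∑ i, A i j = 1) (x : Fin N → ℝ) :
    ∑ i, dd A x i = ∑ j, x j := by
  simp only [dd]
  rw [Finset.sum_comm]
  refine Finset.sum_congr rfl fun j _ => ?_
  rw [← Finset.sum_mul, hcol j, one_mul]

lemma KL_nonneg {N : ℕ} {u v : Fin N → ℝ} (hu : ∀ j, 0 < u j) (hv : ∀ j, 0 < v j) :
    0 ≤ KL u v := by
  unfold KL
  rw [sub_nonneg]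
  refine Finset.sum_le_sum fun j _ => ?_
  have h := Real.log_le_sub_one_of_pos (div_pos (hv j) (hu j))
  rw [Real.log_div (hv j).ne' (hu j).ne'] at h
  rw [Real.log_div (hu j).ne' (hv j).ne']
  have h2 : u j * (Real.log (v j) - Real.log (u j)) ≤ u j * (v j / u j - 1) :=
    mul_le_mul_of_nonneg_left h (hu j).le
  have h4 : u j * (v j / u j) = v j := by
    rw [mul_comm, div_mul_cancel₀ _ (hu j).ne']
  nlinarith [h2, h4]

lemma em_step {M N : ℕ} (A : Fin M → Fin N → ℝ) (b : Fin M → ℝ)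
    (hA : ∀ i j, 0 ≤ A i j) (hcol : ∀ j, ∑ i, A i j = 1)
    (hrow : ∀ i, ∃ j, 0 < A i j) (hb : ∀ i, 0 < b i)
    {x : Fin N → ℝ} (hx : ∀ j, 0 < x j) :
    KL (EMop A b x) x ≤ IAb A b x - IAb A b (EMop A b x) := by
  set y := EMop A b x with hy
  have hypos : ∀ j, 0 < y j := EMop_pos A b hA hcol hrow hb hx
  have hdpos : ∀ i, 0 < dd A x i := dd_pos A hA hrow hx
  have hepos : ∀ i, 0 < dd A y i := dd_pos A hA hrow hypos
  have hfpos : ∀ j, 0 < ff A b x j := ff_pos A b hA hcol hrow hb hx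
  set L : Fin N → ℝ := fun j => Real.log (ff A b x j) with hL
  -- key per-row inequality
  have key : ∀ i, ∑ j, (A i j * x j) * L j ≤
      dd A x i * Real.log (dd A y i / dd A x i) := by
    intro i
    set d := dd A x i with hd
    set e := dd A y i with he
    have hd0 := hdpos i
    have he0 := hepos i
    have step1 : ∀ j, (A i j * x j) * L j ≤
        (A i j * x j) * (Real.log (e / d) - 1) + (A i j * (x j * ff A b x j)) * (d / e) := by
      intro j
      have hS : 0 < ff A b x j / (e / d) := div_pos (hfpos j) (div_pos he0 hd0)
      have h := Real.log_le_sub_one_of_pos hS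
      rw [Real.log_div (hfpos j).ne' (div_pos he0 hd0).ne'] at h
      -- h : L j - log (e/d) ≤ ff j / (e/d) - 1
      have hq : ff A b x j / (e / d) = ff A b x j * (d / e) := by
        field_simp
      rw [hq] at h
      have h2 : (A i j * x j) * L j ≤
          (A i j * x j) * (Real.log (e / d) + ff A b x j * (d / e) - 1) := by
        apply mul_le_mul_of_nonneg_left _ (mul_nonneg (hA i j) (hx j).le)
        linarith
      calc (A i j * x j) * L j ≤
          (A i j * x j) * (Real.log (e / d) + ff A b x j * (d / e) - 1) := h2
        _ = (A i j * x j) * (Real.log (e / d) - 1) + (A i j * (x j * ff A b x j)) * (d / e) := by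
          ring
    calc ∑ j, (A i j * x j) * L j
        ≤ ∑ j, ((A i j * x j) * (Real.log (e / d) - 1) + (A i j * (x j * ff A b x j)) * (d / e)) :=
          Finset.sum_le_sum fun j _ => step1 j
      _ = (∑ j, A i j * x j) * (Real.log (e / d) - 1) + (∑ j, A i j * (x j * ff A b x j)) * (d / e) := by
          rw [Finset.sum_add_distrib, ← Finset.sum_mul, ← Finset.sum_mul]
      _ = d * (Real.log (e / d) - 1) + e * (d / e) := by
          have h1 : (∑ j, A i j * x j) = d := rfl
          have h2 : (∑ j, A i j * (x j * ff A b x j)) = e := by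
            simp only [he, dd, hy, EMop]
          rw [h1, h2]
      _ = d * Real.log (e / d) := by
          field_simp
          rw [div_self (show e ≠ 0 from he0.ne')]
          ring
  -- the central inequality: ∑ j, y j * L j ≤ ∑ i, b i * log (e i / d i)
  have central : ∑ j, y j * L j ≤ ∑ i, b i * Real.log (dd A y i / dd A x i) := by
    have swap : ∑ j, y j * L j =
        ∑ i, (b i / dd A x i) * ∑ j, (A i j * x j) * L j := by
      have h1 : ∀ j, y j * L j =
          ∑ i, (b i / dd A x i) * ((A i j * x j) * L j) := by
        intro j
        simp only [hy, EMop, ff]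
        rw [Finset.mul_sum, Finset.sum_mul]
        refine Finset.sum_congr rfl fun i _ => ?_
        ring
      calc ∑ j, y j * L j = ∑ j, ∑ i, (b i / dd A x i) * ((A i j * x j) * L j) :=
            Finset.sum_congr rfl fun j _ => h1 j
        _ = ∑ i, ∑ j, (b i / dd A x i) * ((A i j * x j) * L j) := Finset.sum_comm
        _ = ∑ i, (b i / dd A x i) * ∑ j, (A i j * x j) * L j := by
            refine Finset.sum_congr rfl fun i _ => ?_
            rw [Finset.mul_sum]
    rw [swap]
    calc ∑ i, (b i / dd A x i) * ∑ j, (A i j * x j) * L j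
        ≤ ∑ i, (b i / dd A x i) * (dd A x i * Real.log (dd A y i / dd A x i)) := by
          refine Finset.sum_le_sum fun i _ => ?_
          exact mul_le_mul_of_nonneg_left (key i) (div_nonneg (hb i).le (hdpos i).le)
      _ = ∑ i, b i * Real.log (dd A y i / dd A x i) := by
          refine Finset.sum_congr rfl fun i _ => ?_
          rw [div_mul_eq_mul_div, mul_comm (dd A x i) _, ← mul_assoc, mul_div_assoc,
            div_self (hdpos i).ne', mul_one]
  -- assemble
  have hKL : KL y x = (∑ j, y j * L j) - (∑ j, y j - ∑ j, x j) := by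
    unfold KL
    rw [Finset.sum_sub_distrib]
    congr 1
    refine Finset.sum_congr rfl fun j _ => ?_
    congr 1
    simp only [hL]
    congr 1
    simp only [hy, EMop]
    rw [mul_div_cancel_left₀ _ (hx j).ne']
  have hI : IAb A b x - IAb A b y =
      (∑ i, b i * Real.log (dd A y i / dd A x i)) - (∑ j, y j - ∑ j, x j) := by
    unfold IAb
    have hlog : ∑ i, b i * Real.log (b i / dd A x i) - ∑ i, b i * Real.log (b i / dd A y i)
        = ∑ i, b i * Real.log (dd A y i / dd A x i) := by
      rw [← Finset.sum_sub_distrib]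
      refine Finset.sum_congr rfl fun i _ => ?_
      rw [← mul_sub]
      congr 1
      rw [Real.log_div (hb i).ne' (hdpos i).ne', Real.log_div (hb i).ne' (hepos i).ne',
        Real.log_div (hepos i).ne' (hdpos i).ne']
      ring
    have hlin : ∑ i, (b i - dd A x i) - ∑ i, (b i - dd A y i)
        = ∑ j, y j - ∑ j, x j := by
      rw [Finset.sum_sub_distrib, Finset.sum_sub_distrib, sum_dd A hcol, sum_dd A hcol]
      ring
    linarith [hlog, hlin]
  rw [hKL, hI]
  linarith [central]

theorem stmt_1
    (M N : ℕ) (hM : 0 < M) (hN : 0 < N)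
    (A : Fin M → Fin N → ℝ) (b : Fin M → ℝ)
    (hA : ∀ i j, 0 ≤ A i j)
    (hcol : ∀ j, ∑ i, A i j = 1)
    (hrow : ∀ i, ∃ j, 0 < A i j)
    (hb : ∀ i, 0 < b i)
    (x : ℕ → Fin N → ℝ)
    (hx0 : ∀ j, 0 < x 0 j)
    (hiter : ∀ k, x (k + 1) = EMop A b (x k)) :
    ∀ k, IAb A b (x (k + 1)) ≤ IAb A b (x k) ∧
      KL (x (k + 1)) (x k) ≤ IAb A b (x k) - IAb A b (x (k + 1)) := by
  have hpos : ∀ k, ∀ j, 0 < x k j := by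
    intro k
    induction k with
    | zero => exact hx0
    | succ n ih =>
      rw [hiter n]
      exact EMop_pos A b hA hcol hrow hb ih
  intro k
  have h2 : KL (x (k + 1)) (x k) ≤ IAb A b (x k) - IAb A b (x (k + 1)) := by
    rw [hiter k]
    exact em_step A b hA hcol hrow hb (hpos k)
  have h0 : 0 ≤ KL (x (k + 1)) (x k) := KL_nonneg (hpos (k + 1)) (hpos k)
  exact ⟨by linarith, h2⟩
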